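/- Let the Σ₂ family {p₀, p₂, p₃, p₄, …} be multiplicatively closed with z² p_j in its ℂ-linear span for every j. Then in ℂ((z⁻¹)), with λ = z², the element p₃ satisfies the elliptic curve equation p₃² = λ³ + 2H³₋₁ λ² + ((H³₋₁)² + 2H³₁) λ + 2H³₋₁ H³₁ + 2H³₃. -/

import Mathlib

open Finset

noncomputable section

/-- `z^j` viewed as a formal Laurent series in `t = z⁻¹` (so `z^j = t^(-j)`). -/
def zp (j : ℤ) : LaurentSeries ℂ := HahnSeries.single (-j) 1

/-- The element `p₀ = 1 + ∑_{k ≥ 1} H^0_k z^(-k)` of the `Σ₂` family. -/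
def sigma2zero (H : ℕ → ℤ → ℂ) : LaurentSeries ℂ :=
  1 + HahnSeries.ofPowerSeries ℤ ℂ (PowerSeries.mk fun k => if 1 ≤ k then H 0 (k:ℤ) else 0)

/-- The elements `p_j = z^j + H^j_{-1} z + ∑_{k ≥ 1} H^j_k z^(-k)`, `j ≥ 2`, of the `Σ₂`
family. -/
def sigma2 (H : ℕ → ℤ → ℂ) (j : ℕ) : LaurentSeries ℂ :=
  zp j + H j (-1) • zp 1
    + HahnSeries.ofPowerSeries ℤ ℂ (PowerSeries.mk fun k => if 1 ≤ k then H j (k:ℤ) else 0)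

/-- The `Σ₂` family `{p₀, p₂, p₃, p₄, …}` as a set of Laurent series. -/
def sigma2Set (H : ℕ → ℤ → ℂ) : Set (LaurentSeries ℂ) :=
  insert (sigma2zero H) (sigma2 H '' {j | 2 ≤ j})

-- auxiliary
def tl (H : ℕ → ℤ → ℂ) (j : ℕ) : LaurentSeries ℂ :=
  HahnSeries.ofPowerSeries ℤ ℂ (PowerSeries.mk fun k => if 1 ≤ k then H j (k:ℤ) else 0)

lemma ofPS_coeff_neg (φ : PowerSeries ℂ) {n : ℤ} (hn : n < 0) :
    (HahnSeries.ofPowerSeries ℤ ℂ φ).coeff n = 0 := by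
  rw [HahnSeries.ofPowerSeries_apply, HahnSeries.embDomain_notin_range]
  rintro ⟨m, hm⟩
  have h2 : ((m:ℕ) : ℤ) = n := hm
  omega

lemma tl_coeff (H : ℕ → ℤ → ℂ) (j : ℕ) (n : ℤ) :
    (tl H j).coeff n = if 1 ≤ n then H j n else 0 := by
  rcases n with n | n
  · have : ((Int.ofNat n) : ℤ) = ((n : ℕ) : ℤ) := rfl
    rw [tl, this, HahnSeries.ofPowerSeries_apply_coeff, PowerSeries.coeff_mk]
    by_cases h : 1 ≤ n
    · rw [if_pos h, if_pos (by exact_mod_cast h)]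
    · rw [if_neg h, if_neg (by exact_mod_cast h)]
  · rw [tl, ofPS_coeff_neg _ (Int.negSucc_lt_zero n), if_neg (by have := Int.negSucc_lt_zero n; omega)]

lemma zp_coeff (j : ℤ) (n : ℤ) : (zp j).coeff n = if n = -j then 1 else 0 := by
  simp [zp, HahnSeries.coeff_single]

lemma zp_mul_coeff (j : ℤ) (x : LaurentSeries ℂ) (n : ℤ) :
    (zp j * x).coeff n = x.coeff (n + j) := by
  have h := HahnSeries.coeff_single_mul_add (r := (1:ℂ)) (x := x) (a := n + j) (b := -j)
  rw [zp]
  rw [show n + j + -j = n by ring] at h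
  rw [h, one_mul]

lemma mul_zp_coeff (j : ℤ) (x : LaurentSeries ℂ) (n : ℤ) :
    (x * zp j).coeff n = x.coeff (n + j) := by
  rw [mul_comm]; exact zp_mul_coeff j x n

lemma zp_mul_zp (i j : ℤ) : zp i * zp j = zp (i + j) := by
  rw [zp, zp, zp, HahnSeries.single_mul_single, one_mul, neg_add]

lemma tl_mul_tl_coeff (H : ℕ → ℤ → ℂ) (i j : ℕ) {n : ℤ} (hn : n ≤ 0) :
    (tl H i * tl H j).coeff n = 0 := by
  rw [tl, tl, ← map_mul]
  rcases lt_or_eq_of_le hn with h | h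
  · exact ofPS_coeff_neg _ h
  · subst h
    have : ((0:ℕ) : ℤ) = (0:ℤ) := rfl
    rw [← this, HahnSeries.ofPowerSeries_apply_coeff]
    simp [PowerSeries.coeff_zero_eq_constantCoeff]

def coeffL (n : ℤ) : LaurentSeries ℂ →ₗ[ℂ] ℂ where
  toFun x := x.coeff n
  map_add' _ _ := HahnSeries.coeff_add
  map_smul' _ _ := HahnSeries.coeff_smul

lemma sigma2zero_coeff (H : ℕ → ℤ → ℂ) (n : ℤ) :
    (sigma2zero H).coeff n = (if n = 0 then 1 else 0) + (if 1 ≤ n then H 0 n else 0) := by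
  rw [sigma2zero, HahnSeries.coeff_add, ← tl, tl_coeff, HahnSeries.coeff_one]
  split_ifs <;> rfl

lemma sigma2_coeff (H : ℕ → ℤ → ℂ) (j : ℕ) (n : ℤ) :
    (sigma2 H j).coeff n = (if n = -(j:ℤ) then 1 else 0)
      + H j (-1) * (if n = -1 then 1 else 0) + (if 1 ≤ n then H j n else 0) := by
  rw [sigma2, HahnSeries.coeff_add, HahnSeries.coeff_add, ← tl, tl_coeff,
    HahnSeries.coeff_smul, zp_coeff, zp_coeff, smul_eq_mul]

/-- rigidity -/
lemma rigid (H : ℕ → ℤ → ℂ) {v : LaurentSeries ℂ}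
    (hv : v ∈ Submodule.span ℂ (sigma2Set H))
    (h0 : v.coeff 0 = 0) (hm : ∀ m : ℕ, 2 ≤ m → v.coeff (-(m:ℤ)) = 0) : v = 0 := by
  obtain ⟨c, hsupp, hsum⟩ := Submodule.mem_span_set.mp hv
  have hcoeff : ∀ n : ℤ, v.coeff n = ∑ x ∈ c.support, c x * x.coeff n := by
    intro n
    rw [← hsum, Finsupp.sum]
    have : ((∑ x ∈ c.support, c x • x).coeff n) = coeffL n (∑ x ∈ c.support, c x • x) := rfl
    rw [this, map_sum]
    simp [coeffL, smul_eq_mul]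
  have hzero : ∀ x ∈ c.support, c x = 0 := by
    intro x hx
    rcases hsupp hx with hx0 | ⟨j, hj2, hjx⟩
    · -- x = sigma2zero H
      have := h0
      rw [hcoeff 0] at this
      rw [← this]
      rw [Finset.sum_eq_single_of_mem x hx]
      · rw [hx0, sigma2zero_coeff]; norm_num
      · intro b hb hbx
        rcases hsupp hb with hb0 | ⟨i, hi2, hix⟩
        · exact absurd (hb0.trans hx0.symm) hbx
        · have hi2' : 2 ≤ i := hi2
          rw [← hix, sigma2_coeff]
          have : ¬ ((0:ℤ) = -(i:ℤ)) := by omega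
          simp [this]
    · -- x = sigma2 H j, 2 ≤ j
      have := hm j hj2
      rw [hcoeff] at this
      rw [← this]
      have hj2' : 2 ≤ j := hj2
      rw [Finset.sum_eq_single_of_mem x hx]
      · rw [← hjx, sigma2_coeff]
        have h1 : ¬ (1 ≤ -(j:ℤ)) := by omega
        have h2 : ¬ (-(j:ℤ) = -1) := by omega
        simp [h1, h2]
      · intro b hb hbx
        rcases hsupp hb with hb0 | ⟨i, hi2, hix⟩
        · rw [hb0, sigma2zero_coeff]
          have h1 : ¬ (-(j:ℤ) = 0) := by omega
          have h2 : ¬ (1 ≤ -(j:ℤ)) := by omega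
          simp [h1, h2]
        · rw [← hix, sigma2_coeff]
          have hi2' : 2 ≤ i := hi2
          have hij : i ≠ j := by
            intro h; exact hbx (by rw [← hix, h, hjx])
          have h1 : ¬ (-(j:ℤ) = -(i:ℤ)) := by omega
          have h2 : ¬ (-(j:ℤ) = -1) := by omega
          have h3 : ¬ (1 ≤ -(j:ℤ)) := by omega
          simp [h1, h2, h3]
  have : c = 0 := by
    ext x
    by_cases hx : x ∈ c.support
    · exact hzero x hx
    · exact Finsupp.notMem_support_iff.mp hx
  rw [← hsum, this, Finsupp.sum_zero_index]


lemma C_coeff (r : ℂ) (n : ℤ) : (HahnSeries.C r).coeff n = if n = 0 then r else 0 := by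
  simp [HahnSeries.C_apply, HahnSeries.coeff_single]

/-- The elliptic curve equation satisfied by `p₃` in the closed subset `W₂ ⊂ Σ₂`:
`p₃² = λ³ + 2H³₋₁ λ² + ((H³₋₁)² + 2H³₁) λ + 2H³₋₁H³₁ + 2H³₃`, where `λ = z²`. -/
theorem sigma2_elliptic_curve (H : ℕ → ℤ → ℂ)
    (hmul : ∀ x ∈ sigma2Set H, ∀ y ∈ sigma2Set H, x * y ∈ Submodule.span ℂ (sigma2Set H))
    (hz2 : ∀ x ∈ sigma2Set H, zp 2 * x ∈ Submodule.span ℂ (sigma2Set H)) :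
    sigma2 H 3 ^ 2
      = zp 2 ^ 3 + (2 * H 3 (-1)) • zp 2 ^ 2
        + ((H 3 (-1))^2 + 2 * H 3 1) • zp 2
        + HahnSeries.C (2 * H 3 (-1) * H 3 1 + 2 * H 3 3) := by
  have hp0mem : sigma2zero H ∈ sigma2Set H := Set.mem_insert _ _
  have hpjmem : ∀ j : ℕ, 2 ≤ j → sigma2 H j ∈ sigma2Set H :=
    fun j hj => Set.mem_insert_of_mem _ ⟨j, hj, rfl⟩
  have hp0tl : sigma2zero H = 1 + tl H 0 := rfl
  -- Step 1 : p₀² = p₀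
  have hp0sq : sigma2zero H * sigma2zero H = sigma2zero H := by
    rw [← sub_eq_zero]
    apply rigid H (Submodule.sub_mem _ (hmul _ hp0mem _ hp0mem) (Submodule.subset_span hp0mem))
    · have h1 : (tl H 0 * tl H 0).coeff 0 = 0 := tl_mul_tl_coeff H 0 0 le_rfl
      rw [hp0tl]
      simp [mul_add, add_mul, HahnSeries.coeff_sub, HahnSeries.coeff_add, tl_coeff, h1,
        HahnSeries.coeff_one]
    · intro m hm
      have h1 : (tl H 0 * tl H 0).coeff (-(m:ℤ)) = 0 := tl_mul_tl_coeff H 0 0 (by omega)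
      have h2 : ¬ (1 ≤ -(m:ℤ)) := by omega
      have h3 : ¬ (-(m:ℤ) = 0) := by omega
      rw [hp0tl]
      simp [mul_add, add_mul, HahnSeries.coeff_sub, HahnSeries.coeff_add, tl_coeff, h1, h2, h3,
        HahnSeries.coeff_one]
  have hp0ne : sigma2zero H ≠ 0 := by
    intro h
    have h0 := sigma2zero_coeff H 0
    rw [h] at h0
    simp at h0
  have hp0 : sigma2zero H = 1 := by
    have h : sigma2zero H * sigma2zero H = sigma2zero H * 1 := by rw [mul_one, hp0sq]
    exact mul_left_cancel₀ hp0ne h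
  -- Step 2 : p₂ = z²
  have hzp2 : zp 2 ∈ Submodule.span ℂ (sigma2Set H) := by
    have h := hz2 _ hp0mem
    rwa [hp0, mul_one] at h
  have hp2 : sigma2 H 2 = zp 2 := by
    rw [← sub_eq_zero]
    apply rigid H (Submodule.sub_mem _ (Submodule.subset_span (hpjmem 2 le_rfl)) hzp2)
    · simp [HahnSeries.coeff_sub, sigma2_coeff, zp_coeff]
    · intro m hm
      have h1 : ¬ (1 ≤ -(m:ℤ)) := by omega
      have h2 : ¬ (-(m:ℤ) = -1) := by omega
      simp only [HahnSeries.coeff_sub, sigma2_coeff, zp_coeff, h1, h2, if_false, Nat.cast_ofNat,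
        mul_zero, add_zero]
      ring
  -- Step 3 : p₄ = z⁴
  have hzp4 : zp 4 ∈ Submodule.span ℂ (sigma2Set H) := by
    have h := hz2 _ (hpjmem 2 le_rfl)
    rwa [hp2, zp_mul_zp, show (2:ℤ) + 2 = 4 from by norm_num] at h
  have hp4 : sigma2 H 4 = zp 4 := by
    rw [← sub_eq_zero]
    apply rigid H (Submodule.sub_mem _ (Submodule.subset_span (hpjmem 4 (by norm_num))) hzp4)
    · simp [HahnSeries.coeff_sub, sigma2_coeff, zp_coeff]
    · intro m hm
      have h1 : ¬ (1 ≤ -(m:ℤ)) := by omega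
      have h2 : ¬ (-(m:ℤ) = -1) := by omega
      simp only [HahnSeries.coeff_sub, sigma2_coeff, zp_coeff, h1, h2, if_false, Nat.cast_ofNat,
        mul_zero, add_zero]
      ring
  have hzp6 : zp 6 ∈ Submodule.span ℂ (sigma2Set H) := by
    have h := hz2 _ (hpjmem 4 (by norm_num))
    rwa [hp4, zp_mul_zp, show (2:ℤ) + 4 = 6 from by norm_num] at h
  -- RHS pieces
  have hzp2sq : zp 2 ^ 2 = zp 4 := by
    rw [pow_two, zp_mul_zp]; norm_num
  have hzp2cube : zp 2 ^ 3 = zp 6 := by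
    rw [pow_succ, hzp2sq, zp_mul_zp]; norm_num
  have hCmem : ∀ r : ℂ, HahnSeries.C r ∈ Submodule.span ℂ (sigma2Set H) := by
    intro r
    have h : HahnSeries.C r = r • sigma2zero H := by
      rw [hp0, ← HahnSeries.C_mul_eq_smul, mul_one]
    rw [h]
    exact Submodule.smul_mem _ _ (Submodule.subset_span hp0mem)
  have hRHSmem : zp 2 ^ 3 + (2 * H 3 (-1)) • zp 2 ^ 2
        + ((H 3 (-1))^2 + 2 * H 3 1) • zp 2
        + HahnSeries.C (2 * H 3 (-1) * H 3 1 + 2 * H 3 3) ∈ Submodule.span ℂ (sigma2Set H) := by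
    rw [hzp2sq, hzp2cube]
    exact Submodule.add_mem _ (Submodule.add_mem _ (Submodule.add_mem _ hzp6
      (Submodule.smul_mem _ _ hzp4)) (Submodule.smul_mem _ _ hzp2)) (hCmem _)
  have hp3mem : sigma2 H 3 ^ 2 ∈ Submodule.span ℂ (sigma2Set H) := by
    rw [pow_two]
    exact hmul _ (hpjmem 3 (by norm_num)) _ (hpjmem 3 (by norm_num))
  have hp3tl : sigma2 H 3 = zp 3 + H 3 (-1) • zp 1 + tl H 3 := rfl
  have hexp : sigma2 H 3 * sigma2 H 3
      = zp 6 + (2 * H 3 (-1)) • zp 4 + (H 3 (-1) ^ 2) • zp 2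
        + (2:ℂ) • (zp 3 * tl H 3) + (2 * H 3 (-1)) • (zp 1 * tl H 3) + tl H 3 * tl H 3 := by
    rw [hp3tl]
    simp only [← HahnSeries.C_mul_eq_smul, map_mul, map_ofNat, map_pow]
    have h13 : zp 1 * zp 3 = zp 4 := by rw [zp_mul_zp]; norm_num
    have h31 : zp 3 * zp 1 = zp 4 := by rw [zp_mul_zp]; norm_num
    have h33 : zp 3 * zp 3 = zp 6 := by rw [zp_mul_zp]; norm_num
    have h11 : zp 1 * zp 1 = zp 2 := by rw [zp_mul_zp]; norm_num
    ring_nf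
    rw [← h33, ← h11, ← h31]
    ring
  rw [← sub_eq_zero]
  apply rigid H (Submodule.sub_mem _ hp3mem hRHSmem)
  · have hττ : (tl H 3 * tl H 3).coeff 0 = 0 := tl_mul_tl_coeff H 3 3 le_rfl
    have h3τ : (zp 3 * tl H 3).coeff 0 = H 3 3 := by
      rw [zp_mul_coeff, tl_coeff]; norm_num
    have h1τ : (zp 1 * tl H 3).coeff 0 = H 3 1 := by
      rw [zp_mul_coeff, tl_coeff]; norm_num
    rw [pow_two, hexp, hzp2sq, hzp2cube]
    simp only [HahnSeries.coeff_sub, HahnSeries.coeff_add, HahnSeries.coeff_smul, smul_eq_mul,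
      zp_coeff, C_coeff, hττ, h3τ, h1τ]
    norm_num
    ring
  · intro m hm
    have hττ : (tl H 3 * tl H 3).coeff (-(m:ℤ)) = 0 := tl_mul_tl_coeff H 3 3 (by omega)
    have h3τ : (zp 3 * tl H 3).coeff (-(m:ℤ))
        = if 1 ≤ -(m:ℤ) + 3 then H 3 (-(m:ℤ) + 3) else 0 := by
      rw [zp_mul_coeff, tl_coeff]
    have h1τ : (zp 1 * tl H 3).coeff (-(m:ℤ)) = 0 := by
      rw [zp_mul_coeff, tl_coeff, if_neg (by omega)]
    rw [pow_two, hexp, hzp2sq, hzp2cube]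
    simp only [HahnSeries.coeff_sub, HahnSeries.coeff_add, HahnSeries.coeff_smul, smul_eq_mul,
      zp_coeff, C_coeff, hττ, h3τ, h1τ]
    by_cases e2 : m = 2
    · subst e2; norm_num
    · have c2 : ¬ (-(m:ℤ) = -2) := by omega
      have c4' : ¬ (1 ≤ -(m:ℤ) + 3) := by omega
      have c0 : ¬ (-(m:ℤ) = 0) := by omega
      simp [c2, c4', c0]


end
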